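/- arXiv:1102.4421 — 2 statements merged into one kernel-verified Lean document; each statement's English description precedes it below -/
import Mathlib

section
/- Let Δ be a finite connected graph with G ≤ Aut(Δ) satisfying Hypothesis (⋆) at every vertex, and let (x,y) be an arc. If E(G_x^{[1]}) = E(G_{x,y}) = E(G_y^{[1]}), then E(G_{x,y}) = 1. -/
open Equiv Subgroup

/-- `N` (a subgroup of `Perm V`) acts transitively on the neighbourhood of `x`. -/
def transOn {V : Type*} (Δ : SimpleGraph V) (N : Subgroup (Equiv.Perm V)) (x : V) : Prop :=
  ∀ u ∈ Δ.neighborSet x, ∀ v ∈ Δ.neighborSet x, ∃ g ∈ N, g u = v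

/-- The permutation group induced by `N` on the neighbourhood of `x` is semiregular. -/
def semiregOn {V : Type*} (Δ : SimpleGraph V) (N : Subgroup (Equiv.Perm V)) (x : V) : Prop :=
  ∀ g ∈ N, (∃ u ∈ Δ.neighborSet x, g u = u) → ∀ v ∈ Δ.neighborSet x, g v = v

/-- The stabiliser `G_x`. -/
def vstab {V : Type*} (G : Subgroup (Equiv.Perm V)) (x : V) : Subgroup (Equiv.Perm V) :=
  G ⊓ MulAction.stabilizer (Equiv.Perm V) x

/-- `G_x^{[i]}`: pointwise stabiliser of the ball of radius `i` around `x`. -/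
def ball {V : Type*} (Δ : SimpleGraph V) (G : Subgroup (Equiv.Perm V)) (x : V) (i : ℕ) :
    Subgroup (Equiv.Perm V) :=
  G ⊓ ⨅ z ∈ {z : V | Δ.dist x z ≤ i}, MulAction.stabilizer (Equiv.Perm V) z

/-- `K` is a normal subgroup of `H` (both subgroups of `Perm V`). -/
def normalIn {V : Type*} (K H : Subgroup (Equiv.Perm V)) : Prop :=
  K ≤ H ∧ ∀ h ∈ H, ∀ k ∈ K, h * k * h⁻¹ ∈ K

/-- `O_p(H)`: the largest normal `p`-subgroup of `H`. -/
def Op {V : Type*} (p : ℕ) (H : Subgroup (Equiv.Perm V)) : Subgroup (Equiv.Perm V) :=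
  sSup {K | normalIn K H ∧ IsPGroup p K}

/-- `E_x = ⟨O_p(G_{x,z}) : z ∈ Δ(x)⟩`. -/
def Ep {V : Type*} (Δ : SimpleGraph V) (G : Subgroup (Equiv.Perm V)) (p : ℕ) (x : V) :
    Subgroup (Equiv.Perm V) :=
  ⨆ z ∈ Δ.neighborSet x, Op p (vstab G x ⊓ vstab G z)

/-- `C_{G_x}(G_x^{[1]})`. -/
def locCent {V : Type*} (Δ : SimpleGraph V) (G : Subgroup (Equiv.Perm V)) (x : V) :
    Subgroup (Equiv.Perm V) :=
  vstab G x ⊓ Subgroup.centralizer ((ball Δ G x 1 : Subgroup (Equiv.Perm V)) : Set (Equiv.Perm V))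

/-- Hypothesis (⋆). -/
def StarHyp {V : Type*} (Δ : SimpleGraph V) (G : Subgroup (Equiv.Perm V)) : Prop :=
  ∀ x : V,
    transOn Δ (vstab G x) x ∧
    (transOn Δ (locCent Δ G x) x ∨ semiregOn Δ (locCent Δ G x) x) ∧
    ∀ p : ℕ, p.Prime → (transOn Δ (Ep Δ G p x) x ∨ semiregOn Δ (Ep Δ G p x) x)

/-- `G` is a group of automorphisms of `Δ`. -/
def isAut {V : Type*} (Δ : SimpleGraph V) (G : Subgroup (Equiv.Perm V)) : Prop :=
  ∀ g ∈ G, ∀ u v : V, Δ.Adj (g u) (g v) ↔ Δ.Adj u v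

/-- `K` is a subnormal subgroup of `H`. -/
def subnormalIn {V : Type*} (K H : Subgroup (Equiv.Perm V)) : Prop :=
  ∃ (n : ℕ) (c : ℕ → Subgroup (Equiv.Perm V)),
    c 0 = K ∧ c n = H ∧ ∀ i < n, normalIn (c i) (c (i + 1))

/-- `K` is quasisimple: perfect and simple modulo its centre. -/
def IsQuasisimple {V : Type*} (K : Subgroup (Equiv.Perm V)) : Prop :=
  commutator ↥K = ⊤ ∧ IsSimpleGroup (↥K ⧸ Subgroup.center ↥K)

/-- `E(H)`: the layer, generated by the components of `H`. -/
def layer {V : Type*} (H : Subgroup (Equiv.Perm V)) : Subgroup (Equiv.Perm V) :=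
  sSup {K | subnormalIn K H ∧ IsQuasisimple K}

/-- `F(H)`: the Fitting subgroup of `H`. -/
def fitting {V : Type*} (H : Subgroup (Equiv.Perm V)) : Subgroup (Equiv.Perm V) :=
  sSup {K | normalIn K H ∧ Group.IsNilpotent ↥K}

/-- `F*(H) = E(H)F(H)`: the generalised Fitting subgroup of `H`. -/
def genFitting {V : Type*} (H : Subgroup (Equiv.Perm V)) : Subgroup (Equiv.Perm V) :=
  layer H ⊔ fitting H

section
variable {A B : Type*} [Group A] [Group B]

lemma commutator_top_of_equiv (f : A ≃* B) (h : commutator A = ⊤) : commutator B = ⊤ := by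
  have h1 : Subgroup.map f.toMonoidHom (commutator A) =
      ⁅Subgroup.map f.toMonoidHom ⊤, Subgroup.map f.toMonoidHom ⊤⁆ :=
    Subgroup.map_commutator ⊤ ⊤ f.toMonoidHom
  rw [h, Subgroup.map_top_of_surjective _ f.surjective] at h1
  rw [show commutator B = ⁅(⊤ : Subgroup B), ⊤⁆ from rfl, ← h1]

lemma center_map_equiv (f : A ≃* B) :
    Subgroup.map f.toMonoidHom (Subgroup.center A) = Subgroup.center B := by
  ext b
  simp only [Subgroup.mem_map, Subgroup.mem_center_iff]
  constructor
  · rintro ⟨a, ha, rfl⟩ b'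
    have := ha (f.symm b')
    calc b' * f a = f (f.symm b' * a) := by simp
    _ = f (a * f.symm b') := by rw [this]
    _ = f a * b' := by simp
  · intro hb
    refine ⟨f.symm b, fun a => ?_, by simp⟩
    have := hb (f a)
    apply f.injective
    simpa using this

lemma simple_quot_of_equiv (f : A ≃* B) (h : IsSimpleGroup (A ⧸ Subgroup.center A)) :
    IsSimpleGroup (B ⧸ Subgroup.center B) := by
  have e : (A ⧸ Subgroup.center A) ≃* (B ⧸ Subgroup.center B) :=
    QuotientGroup.congr _ _ f (center_map_equiv f)
  haveI := h
  haveI : Nontrivial (B ⧸ Subgroup.center B) := e.symm.toEquiv.nontrivial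
  exact IsSimpleGroup.isSimpleGroup_of_surjective e.toMonoidHom e.surjective

end

section
variable {V : Type*}

lemma layer_le_self (H : Subgroup (Equiv.Perm V)) : layer H ≤ H := by
  apply sSup_le
  rintro K ⟨⟨n, c, hc0, hcn, hstep⟩, -⟩
  have key : ∀ i, i ≤ n → c 0 ≤ c i := by
    intro i
    induction i with
    | zero => intro _; exact le_rfl
    | succ j ih => intro hj; exact (ih (by omega)).trans (hstep j (by omega)).1
  rw [← hc0, ← hcn]; exact key n le_rfl

lemma normalIn_map (e : Equiv.Perm V ≃* Equiv.Perm V) {K H : Subgroup (Equiv.Perm V)}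
    (h : normalIn K H) :
    normalIn (Subgroup.map e.toMonoidHom K) (Subgroup.map e.toMonoidHom H) := by
  refine ⟨Subgroup.map_mono h.1, ?_⟩
  intro a ha b hb
  rw [Subgroup.mem_map_equiv] at *
  simpa [map_mul, map_inv] using h.2 _ ha _ hb

lemma subnormalIn_map (e : Equiv.Perm V ≃* Equiv.Perm V) {K H : Subgroup (Equiv.Perm V)}
    (h : subnormalIn K H) :
    subnormalIn (Subgroup.map e.toMonoidHom K) (Subgroup.map e.toMonoidHom H) := by
  obtain ⟨n, c, hc0, hcn, hstep⟩ := h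
  exact ⟨n, fun i => Subgroup.map e.toMonoidHom (c i), by simp [hc0], by simp [hcn],
    fun i hi => normalIn_map e (hstep i hi)⟩

lemma isQuasisimple_map (e : Equiv.Perm V ≃* Equiv.Perm V) {K : Subgroup (Equiv.Perm V)}
    (h : IsQuasisimple K) : IsQuasisimple (Subgroup.map e.toMonoidHom K) := by
  have f : ↥K ≃* ↥(Subgroup.map e.toMonoidHom K) :=
    Subgroup.equivMapOfInjective K e.toMonoidHom e.injective
  exact ⟨commutator_top_of_equiv f h.1, simple_quot_of_equiv f h.2⟩

lemma map_symm_map (e : Equiv.Perm V ≃* Equiv.Perm V) (H : Subgroup (Equiv.Perm V)) :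
    Subgroup.map e.symm.toMonoidHom (Subgroup.map e.toMonoidHom H) = H := by
  ext a
  rw [Subgroup.mem_map_equiv, Subgroup.mem_map_equiv]
  simp

lemma layer_map_le (e : Equiv.Perm V ≃* Equiv.Perm V) (H : Subgroup (Equiv.Perm V)) :
    Subgroup.map e.toMonoidHom (layer H) ≤ layer (Subgroup.map e.toMonoidHom H) := by
  rw [layer, (Subgroup.gc_map_comap e.toMonoidHom).l_sSup]
  apply iSup_le; intro K; apply iSup_le; intro hK
  exact le_sSup ⟨subnormalIn_map e hK.1, isQuasisimple_map e hK.2⟩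

lemma layer_map_eq (e : Equiv.Perm V ≃* Equiv.Perm V) (H : Subgroup (Equiv.Perm V)) :
    layer (Subgroup.map e.toMonoidHom H) = Subgroup.map e.toMonoidHom (layer H) := by
  refine le_antisymm ?_ (layer_map_le e H)
  have h := layer_map_le e.symm (Subgroup.map e.toMonoidHom H)
  rw [map_symm_map] at h
  have h2 := Subgroup.map_mono (f := e.toMonoidHom) h
  have h3 := map_symm_map e.symm (layer (Subgroup.map e.toMonoidHom H))
  rw [MulEquiv.symm_symm] at h3
  rwa [h3] at h2
end

section MainAux
variable {V : Type*}

lemma mem_vstab_iff {G : Subgroup (Equiv.Perm V)} {x : V} {a : Equiv.Perm V} :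
    a ∈ vstab G x ↔ a ∈ G ∧ a x = x := by
  simp [vstab, Subgroup.mem_inf, MulAction.mem_stabilizer_iff, Equiv.Perm.smul_def]

lemma mem_ball_iff {Δ : SimpleGraph V} {G : Subgroup (Equiv.Perm V)} {x : V}
    {a : Equiv.Perm V} :
    a ∈ ball Δ G x 1 ↔ a ∈ G ∧ ∀ z, Δ.dist x z ≤ 1 → a z = z := by
  simp [ball, Subgroup.mem_inf, Subgroup.mem_iInf, MulAction.mem_stabilizer_iff,
    Equiv.Perm.smul_def, Set.mem_setOf_eq]

lemma conj_mem_ball {Δ : SimpleGraph V} {G : Subgroup (Equiv.Perm V)} {x : V}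
    (hconn : Δ.Connected) (hG : isAut Δ G) {g a : Equiv.Perm V}
    (hg : g ∈ vstab G x) (ha : a ∈ ball Δ G x 1) :
    g * a * g⁻¹ ∈ ball Δ G x 1 := by
  rw [mem_vstab_iff] at hg
  rw [mem_ball_iff] at ha ⊢
  have hgG : g ∈ G := hg.1
  have hgx : g x = x := hg.2
  have hginvx : g⁻¹ x = x := by
    conv_lhs => rw [← hgx]
    simp
  refine ⟨mul_mem (mul_mem hgG ha.1) (inv_mem hgG), ?_⟩
  intro z hz
  have hz' : Δ.dist x (g⁻¹ z) ≤ 1 := by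
    rcases Nat.le_one_iff_eq_zero_or_eq_one.mp hz with h0 | h1
    · have : x = z := (hconn.dist_eq_zero_iff).mp h0
      subst this
      rw [hginvx]
      simp [SimpleGraph.dist_self]
    · have hadj : Δ.Adj x z := SimpleGraph.dist_eq_one_iff_adj.mp h1
      have : Δ.Adj (g⁻¹ x) (g⁻¹ z) := (hG g⁻¹ (inv_mem hgG) x z).mpr hadj
      rw [hginvx] at this
      exact le_of_eq (SimpleGraph.dist_eq_one_iff_adj.mpr this)
  have := ha.2 _ hz'
  simp only [Equiv.Perm.mul_apply, this]
  simp

lemma ball_conj_eq {Δ : SimpleGraph V} {G : Subgroup (Equiv.Perm V)} {x : V}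
    (hconn : Δ.Connected) (hG : isAut Δ G) {g : Equiv.Perm V} (hg : g ∈ vstab G x) :
    Subgroup.map (MulAut.conj g).toMonoidHom (ball Δ G x 1) = ball Δ G x 1 := by
  apply le_antisymm
  · rintro _ ⟨a, ha, rfl⟩
    exact conj_mem_ball hconn hG hg ha
  · intro a ha
    refine ⟨g⁻¹ * a * g, conj_mem_ball hconn hG (inv_mem hg) (by simpa using ha), ?_⟩
    simp [MulAut.conj_apply, mul_assoc]

end MainAux

theorem stmt3 {V : Type*} [Fintype V] (Δ : SimpleGraph V) (G : Subgroup (Equiv.Perm V))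
    (hconn : Δ.Connected) (hG : isAut Δ G) (hstar : StarHyp Δ G)
    {x y : V} (hxy : Δ.Adj x y)
    (h1 : layer (ball Δ G x 1) = layer (vstab G x ⊓ vstab G y))
    (h2 : layer (ball Δ G y 1) = layer (vstab G x ⊓ vstab G y)) :
    layer (vstab G x ⊓ vstab G y) = ⊥ := by
  set E := layer (vstab G x ⊓ vstab G y) with hE
  -- E is normalized by vstab G x and vstab G y
  have normx : ∀ g ∈ vstab G x, Subgroup.map (MulAut.conj g).toMonoidHom E = E := by
    intro g hg
    rw [← h1, ← layer_map_eq, ball_conj_eq hconn hG hg]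
  have normy : ∀ g ∈ vstab G y, Subgroup.map (MulAut.conj g).toMonoidHom E = E := by
    intro g hg
    rw [← h2, ← layer_map_eq, ball_conj_eq hconn hG hg]
  have conj_mem : ∀ g : Equiv.Perm V,
      Subgroup.map (MulAut.conj g).toMonoidHom E = E → ∀ e ∈ E, g⁻¹ * e * g ∈ E := by
    intro g hmap e he
    rw [← hmap] at he
    obtain ⟨k, hk, hke⟩ := he
    have : k = g⁻¹ * e * g := by
      rw [← hke]; simp [MulAut.conj_apply, mul_assoc]
    rwa [← this]
  have Ele : E ≤ vstab G x ⊓ vstab G y := layer_le_self _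
  -- the step lemma along the graph
  set R : V → Prop := fun z => ∃ g : Equiv.Perm V, g ∈ G ∧
      (∀ e ∈ E, g⁻¹ * e * g ∈ E) ∧ (g x = z ∨ g y = z) with hR
  have step : ∀ z w : V, Δ.Adj z w → R z → R w := by
    intro z w hzw ⟨g, hgG, hgE, hgz⟩
    rcases hgz with hgx | hgy
    · have hadj : Δ.Adj x (g⁻¹ w) := by
        have := (hG g⁻¹ (inv_mem hgG) z w).mpr hzw
        rwa [← hgx, Equiv.Perm.inv_def, Equiv.symm_apply_apply] at this
      obtain ⟨h, hh, hhy⟩ := (hstar x).1 y (by simpa using hxy) (g⁻¹ w) (by simpa using hadj)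
      refine ⟨g * h, mul_mem hgG (mem_vstab_iff.mp hh).1, ?_, Or.inr ?_⟩
      · intro e he
        have h1' := hgE e he
        have h2' := conj_mem h (normx h hh) _ h1'
        simpa [mul_assoc] using h2'
      · show g (h y) = w
        rw [hhy]; simp
    · have hadj : Δ.Adj y (g⁻¹ w) := by
        have := (hG g⁻¹ (inv_mem hgG) z w).mpr hzw
        rwa [← hgy, Equiv.Perm.inv_def, Equiv.symm_apply_apply] at this
      obtain ⟨h, hh, hhx⟩ := (hstar y).1 x (by simpa using hxy.symm) (g⁻¹ w)
        (by simpa using hadj)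
      refine ⟨g * h, mul_mem hgG (mem_vstab_iff.mp hh).1, ?_, Or.inl ?_⟩
      · intro e he
        have h1' := hgE e he
        have h2' := conj_mem h (normy h hh) _ h1'
        simpa [mul_assoc] using h2'
      · show g (h x) = w
        rw [hhx]; simp
  have walkstep : ∀ (u w : V), Δ.Walk u w → R u → R w := by
    intro u w p
    induction p with
    | nil => exact id
    | cons hadj q ih => exact fun hu => ih (step _ _ hadj hu)
  have Rall : ∀ z : V, R z := by
    intro z
    obtain ⟨p⟩ := hconn x z
    exact walkstep x z p ⟨1, one_mem G, fun e he => by simpa using he, Or.inl (by simp)⟩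
  -- now every element of E fixes every vertex
  rw [eq_bot_iff]
  intro e he
  have fix : ∀ z : V, e z = z := by
    intro z
    obtain ⟨g, hgG, hgE, hz⟩ := Rall z
    have hmem := hgE e he
    have hx' : (g⁻¹ * e * g) x = x := (mem_vstab_iff.mp (Ele hmem).1).2
    have hy' : (g⁻¹ * e * g) y = y := (mem_vstab_iff.mp (Ele hmem).2).2
    rcases hz with rfl | rfl
    · have := congrArg g hx'
      simpa [Equiv.Perm.mul_apply] using this
    · have := congrArg g hy'
      simpa [Equiv.Perm.mul_apply] using this
  have : e = 1 := Equiv.ext fun z => by simpa using fix z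
  simp [this, Subgroup.mem_bot]
end

section
/- Assume Hypothesis (⋆). Let p be a prime, (x,y) an arc, and E_x = ⟨O_p(G_{x,z}) : z ∈ Δ(x)⟩. If E_x ⊄ G_x^{[1]}, then for every r-subgroup R of G_x^{[1]} with r a prime different from p, the normaliser N_{G_x}(R) acts transitively on Δ(x). -/
open Equiv Subgroup

section AUX
variable {V : Type*}

lemma mem_vstab {G : Subgroup (Perm V)} {x : V} {g : Perm V} :
    g ∈ vstab G x ↔ g ∈ G ∧ g x = x := by
  simp [vstab, MulAction.mem_stabilizer_iff]

lemma dist_le_one_iff {Δ : SimpleGraph V} (hconn : Δ.Connected) {x z : V} :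
    Δ.dist x z ≤ 1 ↔ z = x ∨ Δ.Adj x z := by
  constructor
  · intro h
    rcases Nat.le_one_iff_eq_zero_or_eq_one.mp h with h0 | h1
    · exact Or.inl (hconn.dist_eq_zero_iff.mp h0).symm
    · exact Or.inr (SimpleGraph.dist_eq_one_iff_adj.mp h1)
  · rintro (rfl | ha)
    · simp [SimpleGraph.dist_self]
    · exact le_of_eq (SimpleGraph.dist_eq_one_iff_adj.mpr ha)

lemma mem_ball_one {Δ : SimpleGraph V} {G : Subgroup (Perm V)} {x : V} (hconn : Δ.Connected)
    {g : Perm V} :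
    g ∈ ball Δ G x 1 ↔ g ∈ G ∧ g x = x ∧ ∀ w, Δ.Adj x w → g w = w := by
  unfold ball
  simp only [Subgroup.mem_inf, Subgroup.mem_iInf, MulAction.mem_stabilizer_iff, Perm.smul_def,
    Set.mem_setOf_eq]
  constructor
  · rintro ⟨hg, h⟩
    exact ⟨hg, h x (by simp [dist_le_one_iff hconn]),
      fun w hw => h w (by simp [dist_le_one_iff hconn, hw])⟩
  · rintro ⟨hg, hx, hnb⟩
    refine ⟨hg, fun z hz => ?_⟩
    rcases (dist_le_one_iff hconn).mp hz with rfl | ha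
    · exact hx
    · exact hnb z ha

lemma vstab_inv_fix {G : Subgroup (Perm V)} {x : V} {g : Perm V} (hg : g ∈ vstab G x) :
    g⁻¹ x = x := by
  have := (mem_vstab.mp hg).2
  exact (Equiv.symm_apply_eq g).mpr this.symm

lemma stab_maps_nbr {Δ : SimpleGraph V} {G : Subgroup (Perm V)} (hG : isAut Δ G) {x w : V}
    {g : Perm V} (hg : g ∈ vstab G x) (hw : Δ.Adj x w) : Δ.Adj x (g w) := by
  have h := (hG g (mem_vstab.mp hg).1 x w).mpr hw
  rwa [(mem_vstab.mp hg).2] at h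

lemma ball_conj {Δ : SimpleGraph V} {G : Subgroup (Perm V)} {x : V} (hconn : Δ.Connected)
    (hG : isAut Δ G) {h b : Perm V} (hh : h ∈ vstab G x) (hb : b ∈ ball Δ G x 1) :
    h * b * h⁻¹ ∈ ball Δ G x 1 := by
  obtain ⟨hbG, hbx, hbn⟩ := (mem_ball_one hconn).mp hb
  refine (mem_ball_one hconn).mpr ⟨?_, ?_, ?_⟩
  · exact mul_mem (mul_mem (mem_vstab.mp hh).1 hbG) (inv_mem (mem_vstab.mp hh).1)
  · simp only [Perm.mul_apply]
    rw [vstab_inv_fix hh, hbx, (mem_vstab.mp hh).2]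
  · intro w hw
    simp only [Perm.mul_apply]
    have h1 : Δ.Adj x (h⁻¹ w) := stab_maps_nbr hG (inv_mem hh) hw
    rw [hbn _ h1]
    simp

lemma Op_le {p : ℕ} {H : Subgroup (Perm V)} : Op p H ≤ H :=
  sSup_le fun _ hK => hK.1.1

lemma le_normalizer_of_normalIn {K H : Subgroup (Perm V)} (h : normalIn K H) :
    H ≤ Subgroup.normalizer (K : Set (Perm V)) := by
  intro a ha
  rw [Subgroup.mem_normalizer_iff]
  intro g
  constructor
  · exact fun hg => h.2 a ha g hg
  · intro hg
    have := h.2 a⁻¹ (inv_mem ha) _ hg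
    simpa [mul_assoc] using this

lemma Op_conj {p : ℕ} {H : Subgroup (Perm V)} {a q : Perm V} (ha : a ∈ H) (hq : q ∈ Op p H) :
    a * q * a⁻¹ ∈ Op p H := by
  classical
  set S := {K : Subgroup (Perm V) | normalIn K H ∧ IsPGroup p K} with hS
  have hmap : ∀ K ∈ S, Subgroup.map (MulAut.conj a).toMonoidHom K = K := by
    intro K hK
    apply le_antisymm
    · rintro _ ⟨k, hk, rfl⟩
      simpa [MulAut.conj] using hK.1.2 a ha k hk
    · intro k hk
      refine ⟨a⁻¹ * k * a, ?_, by simp [MulAut.conj, mul_assoc]⟩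
      simpa [mul_assoc] using hK.1.2 a⁻¹ (inv_mem ha) k hk
  have hle : Subgroup.map (MulAut.conj a).toMonoidHom (Op p H) ≤ Op p H := by
    rw [Op, (Subgroup.gc_map_comap ((MulAut.conj a).toMonoidHom)).l_sSup]
    refine iSup₂_le fun K hK => ?_
    rw [hmap K hK]
    exact le_sSup hK
  exact hle ⟨q, hq, by simp [MulAut.conj, mul_assoc]⟩

lemma Op_pgroup [Fintype V] {p : ℕ} {H : Subgroup (Perm V)} : IsPGroup p (Op p H) := by
  classical
  set S := {K : Subgroup (Perm V) | normalIn K H ∧ IsPGroup p K} with hS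
  have key : ∀ T : Set (Subgroup (Perm V)), T.Finite → T ⊆ S → IsPGroup p ↥(sSup T) := by
    intro T hT
    refine Set.Finite.induction_on (motive := fun T _ => T ⊆ S → IsPGroup p ↥(sSup T)) T hT ?_ ?_
    · intro _
      rw [sSup_empty]
      exact IsPGroup.of_bot
    · intro K T' hKT' hT' ih hsub
      rw [sSup_insert]
      have hK : K ∈ S := hsub (Set.mem_insert _ _)
      refine IsPGroup.to_sup_of_normal_left' hK.2
        (ih (fun L hL => hsub (Set.mem_insert_of_mem _ hL))) ?_
      calc sSup T' ≤ H := sSup_le fun L hL => (hsub (Set.mem_insert_of_mem _ hL)).1.1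
      _ ≤ Subgroup.normalizer (K : Set (Perm V)) := le_normalizer_of_normalIn hK.1
  exact key S (Set.toFinite _) le_rfl

lemma subgroup_eq_of_le_of_card_le {G' : Type*} [Group G'] [Finite G'] {H K : Subgroup G'}
    (h : H ≤ K) (hc : Nat.card K ≤ Nat.card H) : H = K := by
  apply SetLike.coe_injective
  apply Set.eq_of_subset_of_ncard_le h ?_ (Set.toFinite _)
  rw [← Nat.card_coe_set_eq, ← Nat.card_coe_set_eq]
  exact hc

end AUX

lemma pgroups_trivial_inter {G' : Type*} [Group G'] [Finite G'] {p r : ℕ} (hp : p.Prime)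
    (hr : r.Prime) (hrp : r ≠ p) {P R : Subgroup G'} (hP : IsPGroup p P) (hR : IsPGroup r R)
    {t : G'} (htP : t ∈ P) (htR : t ∈ R) : t = 1 := by
  haveI := Fact.mk hp
  haveI := Fact.mk hr
  have hd : Disjoint P R := IsPGroup.disjoint_of_ne p r (fun h => hrp h.symm) P R hP hR
  exact Subgroup.disjoint_def.mp hd htP htR

lemma key_conj {V : Type*} [Fintype V] {Δ : SimpleGraph V} {G : Subgroup (Perm V)}
    (hconn : Δ.Connected) (hG : isAut Δ G) {p r : ℕ} (hp : p.Prime) (hr : r.Prime)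
    (hrp : r ≠ p) {x z : V} (hz : Δ.Adj x z) {R : Subgroup (Perm V)}
    (hRB : R ≤ ball Δ G x 1) (hRr : IsPGroup r R) {g : Perm V}
    (hg : g ∈ Op p (vstab G x ⊓ vstab G z)) :
    ∃ n, (n ∈ vstab G x ⊓ Subgroup.normalizer (R : Set (Perm V))) ∧ ∀ w, Δ.Adj x w → n w = g w := by
  classical
  haveI := Fact.mk hp
  haveI := Fact.mk hr
  set A := vstab G x ⊓ vstab G z with hA
  set B := ball Δ G x 1 with hB
  set P := Op p A with hP
  have hPA : P ≤ A := Op_le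
  have hBx : B ≤ vstab G x := by
    intro b hb
    obtain ⟨h1, h2, h3⟩ := (mem_ball_one hconn).mp hb
    exact mem_vstab.mpr ⟨h1, h2⟩
  have hBz : B ≤ vstab G z := by
    intro b hb
    obtain ⟨h1, h2, h3⟩ := (mem_ball_one hconn).mp hb
    exact mem_vstab.mpr ⟨h1, h3 z hz⟩
  have hBA : B ≤ A := le_inf hBx hBz
  have hAx : A ≤ vstab G x := inf_le_left
  -- P1 = P ⊓ B
  set P1 := P ⊓ B with hP1
  have hP1p : IsPGroup p P1 := (Op_pgroup (p := p) (H := A)).to_inf_left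
  have hP1conj : ∀ a ∈ A, ∀ q ∈ P1, a * q * a⁻¹ ∈ P1 := by
    intro a ha q hq
    exact Subgroup.mem_inf.mpr ⟨Op_conj ha (Subgroup.mem_inf.mp hq).1,
      ball_conj hconn hG (hAx ha) (Subgroup.mem_inf.mp hq).2⟩
  set K := P1 ⊔ R with hK
  have hKB : K ≤ B := sup_le inf_le_right hRB
  have hKA : K ≤ A := hKB.trans hBA
  have hgP : g ∈ P := hg
  have hgx : g ∈ vstab G x := hAx (hPA hgP)
  -- commutator condition
  have hcommP1 : ∀ s ∈ R, g * s * g⁻¹ * s⁻¹ ∈ P1 := by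
    intro s hs
    refine Subgroup.mem_inf.mpr ⟨?_, ?_⟩
    · have h1 : s * g⁻¹ * s⁻¹ ∈ P := Op_conj (hBA (hRB hs)) (inv_mem hgP)
      have : g * s * g⁻¹ * s⁻¹ = g * (s * g⁻¹ * s⁻¹) := by group
      rw [this]
      exact mul_mem hgP h1
    · have h1 : g * s * g⁻¹ ∈ B := ball_conj hconn hG hgx (hRB hs)
      exact mul_mem h1 (inv_mem (hRB hs))
  have hRK : R ≤ K := le_sup_right
  have hP1K : P1 ≤ K := le_sup_left
  have hcomm : ∀ s ∈ R, g * s * g⁻¹ ∈ K := by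
    intro s hs
    have : g * s * g⁻¹ = (g * s * g⁻¹ * s⁻¹) * s := by group
    rw [this]
    exact mul_mem (hP1K (hcommP1 s hs)) (hRK hs)
  set R' := R.subgroupOf K with hR'
  set P1' := P1.subgroupOf K with hP1'
  have hR'r : IsPGroup r R' := hRr.of_equiv (Subgroup.subgroupOfEquivOfLe hRK).symm
  have hP1'p : IsPGroup p P1' := hP1p.of_equiv (Subgroup.subgroupOfEquivOfLe hP1K).symm
  have hP1'norm : P1'.Normal := by
    constructor
    intro n hn k
    rw [Subgroup.mem_subgroupOf] at hn ⊢
    simpa using hP1conj (↑k) (hKA k.2) (↑n) hn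
  set φ := QuotientGroup.mk' P1' with hφ
  have hker : φ.ker = P1' := QuotientGroup.ker_mk' _
  have htop : R' ⊔ P1' = ⊤ := by
    rw [hR', hP1', ← Subgroup.subgroupOf_sup hRK hP1K, sup_comm R P1]
    have : P1 ⊔ R = K := rfl
    rw [this]
    exact Subgroup.subgroupOf_self K
  have hcover : ∀ k : ↥K, ∃ t, t ∈ R' ∧ t⁻¹ * k ∈ P1' := by
    intro k
    have h1 : k ∈ Subgroup.comap φ (Subgroup.map φ R') := by
      rw [Subgroup.comap_map_eq, hker, htop]
      exact Subgroup.mem_top k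
    obtain ⟨t, ht, hphi⟩ := h1
    refine ⟨t, ht, ?_⟩
    have h2 : t⁻¹ * k ∈ φ.ker := by
      rw [MonoidHom.mem_ker, map_mul, map_inv, hphi]
      simp
    rwa [hker] at h2
  -- Sylow
  obtain ⟨S, hRS⟩ := hR'r.exists_le_sylow
  have hSR : (S : Subgroup ↥K) = R' := by
    refine le_antisymm ?_ hRS
    intro s hs
    obtain ⟨t, ht, hts⟩ := hcover s
    have h1 : t⁻¹ * s ∈ (S : Subgroup ↥K) := mul_mem (inv_mem (hRS ht)) hs
    have h2 : t⁻¹ * s = 1 :=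
      pgroups_trivial_inter hr hp (fun h => hrp h.symm) S.isPGroup' hP1'p h1 hts
    exact (inv_mul_eq_one.mp h2) ▸ ht
  -- the conjugate subgroup
  set f := (MulAut.conj g).toMonoidHom with hf
  set Rg := Subgroup.map f R with hRg
  have hRgK : Rg ≤ K := by
    rintro _ ⟨s, hs, rfl⟩
    simpa [hf, MulAut.conj, mul_assoc] using hcomm s hs
  set Rg' := Rg.subgroupOf K with hRg'
  have hRg'r : IsPGroup r Rg' := (hRr.map f).of_equiv (Subgroup.subgroupOfEquivOfLe hRgK).symm
  obtain ⟨S₂, hRgS₂⟩ := hRg'r.exists_le_sylow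
  obtain ⟨k, hk⟩ := MulAction.exists_smul_eq (↥K) S₂ S
  -- cards
  have hcardR : Nat.card R' = Nat.card R :=
    Nat.card_congr (Subgroup.subgroupOfEquivOfLe hRK).toEquiv
  have hcardRg : Nat.card Rg' = Nat.card R := by
    rw [Nat.card_congr (Subgroup.subgroupOfEquivOfLe hRgK).toEquiv]
    exact (Nat.card_congr (Subgroup.equivMapOfInjective R f
      (MulAut.conj g).injective).toEquiv).symm
  have hcardS₂ : Nat.card (S₂ : Subgroup ↥K) = Nat.card R := by
    have h1 : Nat.card ((k • S₂ : Sylow r ↥K) : Subgroup ↥K) = Nat.card (S₂ : Subgroup ↥K) :=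
      (Nat.card_congr (Subgroup.equivSMul (MulAut.conj k) (S₂ : Subgroup ↥K)).toEquiv).symm
    rw [hk, hSR, hcardR] at h1
    exact h1.symm
  have hS₂Rg : (S₂ : Subgroup ↥K) = Rg' := by
    refine (subgroup_eq_of_le_of_card_le hRgS₂ ?_).symm
    rw [hcardS₂, hcardRg]
  -- membership translation
  have hconjmem : ∀ h : ↥K, h ∈ Rg' ↔ k * h * k⁻¹ ∈ R' := by
    intro h
    rw [← hSR, ← hk, ← hS₂Rg]
    rw [Sylow.coe_subgroup_smul, Subgroup.mem_pointwise_smul_iff_inv_smul_mem]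
    have : (MulAut.conj k)⁻¹ • (k * h * k⁻¹) = h := by
      show (MulAut.conj k)⁻¹ (k * h * k⁻¹) = h
      rw [MulAut.conj_inv_apply]
      group
    rw [this]
  -- construct n
  refine ⟨(↑k : Perm V) * g, Subgroup.mem_inf.mpr ⟨mul_mem (hBx (hKB k.2)) hgx, ?_⟩, ?_⟩
  · rw [Subgroup.mem_normalizer_iff]
    intro h
    constructor
    · intro hh
      have h1 : g * h * g⁻¹ ∈ Rg := ⟨h, hh, by simp [hf, MulAut.conj_apply]⟩
      have h2 : (⟨g * h * g⁻¹, hRgK h1⟩ : ↥K) ∈ Rg' := by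
        rw [hRg', Subgroup.mem_subgroupOf]; exact h1
      have h3 := (hconjmem _).mp h2
      rw [hR', Subgroup.mem_subgroupOf] at h3
      have h4 : ((k * ⟨g * h * g⁻¹, hRgK h1⟩ * k⁻¹ : ↥K) : Perm V)
          = (↑k : Perm V) * (g * h * g⁻¹) * (↑k : Perm V)⁻¹ := by
        push_cast
        ring_nf
      rw [h4] at h3
      have h5 : ((↑k : Perm V) * g) * h * ((↑k : Perm V) * g)⁻¹
          = (↑k : Perm V) * (g * h * g⁻¹) * (↑k : Perm V)⁻¹ := by group
      rw [h5]
      exact h3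
    · intro hh
      set w := ((↑k : Perm V) * g) * h * ((↑k : Perm V) * g)⁻¹ with hwdef
      have hwR : w ∈ R := hh
      have hwK : w ∈ K := hRK hwR
      have h2 : (⟨w, hwK⟩ : ↥K) ∈ R' := by rw [hR', Subgroup.mem_subgroupOf]; exact hwR
      have h3 : k⁻¹ * ⟨w, hwK⟩ * k ∈ Rg' := by
        rw [hconjmem]
        have : k * (k⁻¹ * ⟨w, hwK⟩ * k) * k⁻¹ = ⟨w, hwK⟩ := by group
        rw [this]
        exact h2
      rw [hRg', Subgroup.mem_subgroupOf] at h3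
      obtain ⟨s, hs, hfs⟩ := h3
      have hfs' : g * s * g⁻¹ = ((k⁻¹ * ⟨w, hwK⟩ * k : ↥K) : Perm V) := by
        rw [← hfs]; simp [hf, MulAut.conj_apply]
      have h4 : ((k⁻¹ * ⟨w, hwK⟩ * k : ↥K) : Perm V)
          = (↑k : Perm V)⁻¹ * w * (↑k : Perm V) := by push_cast; ring_nf
      rw [h4, hwdef] at hfs'
      have h5 : g * s * g⁻¹ = g * h * g⁻¹ := by
        rw [hfs']; group
      have h6 : h = s := by
        have := congrArg (fun t => g⁻¹ * t * g) h5
        simpa [mul_assoc] using this.symm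
      rw [h6]; exact hs
  · intro w hw
    have h1 : Δ.Adj x (g w) := stab_maps_nbr hG hgx hw
    have h2 := ((mem_ball_one hconn).mp (hKB k.2)).2.2 (g w) h1
    simp [Perm.mul_apply, h2]

theorem stmt6 {V : Type*} [Fintype V] (Δ : SimpleGraph V) (G : Subgroup (Equiv.Perm V))
    (hconn : Δ.Connected) (hG : isAut Δ G) (hstar : StarHyp Δ G)
    (p : ℕ) (hp : p.Prime) {x y : V} (hxy : Δ.Adj x y)
    (hEx : ¬ Ep Δ G p x ≤ ball Δ G x 1) :
    ∀ (r : ℕ), r.Prime → r ≠ p → ∀ R : Subgroup (Equiv.Perm V),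
      R ≤ ball Δ G x 1 → IsPGroup r R →
      transOn Δ (vstab G x ⊓ Subgroup.normalizer (R : Set (Equiv.Perm V))) x := by
  classical
  intro r hr hrp R hRB hRr
  -- Step 1 : E_x is transitive on Δ(x)
  have hEtrans : transOn Δ (Ep Δ G p x) x := by
    rcases (hstar x).2.2 p hp with h | h
    · exact h
    · exfalso
      apply hEx
      rw [Ep]
      refine iSup₂_le fun z hz => ?_
      intro q hq
      have hle : Op p (vstab G x ⊓ vstab G z) ≤ Ep Δ G p x := by
        rw [Ep]
        exact le_iSup₂ (f := fun z _ => Op p (vstab G x ⊓ vstab G z)) z hz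
      have hqA : q ∈ vstab G x ⊓ vstab G z := Op_le hq
      have hqz : q z = z := (mem_vstab.mp (Subgroup.mem_inf.mp hqA).2).2
      have hfix := h q (hle hq) ⟨z, hz, hqz⟩
      refine (mem_ball_one hconn).mpr ⟨(mem_vstab.mp (Subgroup.mem_inf.mp hqA).1).1,
        (mem_vstab.mp (Subgroup.mem_inf.mp hqA).1).2, fun w hw => hfix w hw⟩
  -- Step 2 : the subgroup of elements acting on Δ(x) like some element of the normaliser
  set N := vstab G x ⊓ Subgroup.normalizer (R : Set (Perm V)) with hN
  set M : Subgroup (Equiv.Perm V) :=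
    { carrier := {g | g ∈ vstab G x ∧ ∃ n ∈ N, ∀ w, Δ.Adj x w → n w = g w}
      one_mem' := ⟨one_mem _, 1, one_mem _, by intro w _; rfl⟩
      mul_mem' := by
        rintro a b ⟨hav, na, hna, ha⟩ ⟨hbv, nb, hnb, hb⟩
        refine ⟨mul_mem hav hbv, na * nb, mul_mem hna hnb, ?_⟩
        intro w hw
        have hbw : Δ.Adj x (b w) := stab_maps_nbr hG hbv hw
        simp only [Perm.mul_apply]
        rw [hb w hw, ha _ hbw]
      inv_mem' := by
        rintro a ⟨hav, n, hn, ha⟩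
        refine ⟨inv_mem hav, n⁻¹, inv_mem hn, ?_⟩
        intro w hw
        have h1 : Δ.Adj x (a⁻¹ w) := stab_maps_nbr hG (inv_mem hav) hw
        have h2 := ha _ h1
        rw [show a (a⁻¹ w) = w by simp] at h2
        have : n⁻¹ (n (a⁻¹ w)) = n⁻¹ w := by rw [h2]
        rw [show n⁻¹ (n (a⁻¹ w)) = a⁻¹ w by simp] at this
        exact this.symm } with hM
  have hEM : Ep Δ G p x ≤ M := by
    rw [Ep]
    refine iSup₂_le fun z hz => ?_
    intro q hq
    have hqx : q ∈ vstab G x := (Subgroup.mem_inf.mp (Op_le hq)).1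
    obtain ⟨n, hn, hnw⟩ := key_conj hconn hG hp hr hrp hz hRB hRr hq
    exact ⟨hqx, n, hn, hnw⟩
  -- conclusion
  intro u hu v hv
  obtain ⟨e, he, hev⟩ := hEtrans u hu v hv
  obtain ⟨-, n, hn, hnw⟩ := hEM he
  refine ⟨n, hn, ?_⟩
  rw [hnw u hu]
  exact hev
end
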